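/- arXiv:2602.03131 — 2 statements merged into one kernel-verified Lean document; each statement's English description precedes it below -/
import Mathlib

section
/- Let f : ℝ³_x × ℝ³_v → ℝ be a nonnegative measurable function with ‖f‖_{L∞} ≤ M and ∫∫ f(1+|v|)² dv dx < ∞. Then for every p with 1 ≤ p ≤ 5/4, the current j(x) = ∫_{ℝ³} v f(x,v) dv satisfies ‖ |j| ‖_{L^p(ℝ³_x)} ≤ C(M) · (1 + ∫∫_{ℝ⁶} (1+|v|)² f dv dx). -/
open MeasureTheory ENNReal Metric

abbrev E3 := EuclideanSpace ℝ (Fin 3)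

/-- Splitting the velocity integral at radius `R = (e/M₁)^{1/5}` gives the
pointwise interpolation bound `∫ g ‖v‖ ≤ (B+1) M₁^{1/5} e^{4/5}`. -/
lemma split_bound (M₁ : ℝ) (hM₁ : 0 < M₁) (g : E3 → ℝ)
    (hg0 : ∀ v, 0 ≤ g v) (hgM : ∀ v, g v ≤ M₁) {e : ℝ} (he : 0 < e)
    (hE : (∫⁻ v : E3, ENNReal.ofReal (g v * (1 + ‖v‖) ^ 2)) ≤ ENNReal.ofReal e) :
    (∫⁻ v : E3, ENNReal.ofReal (g v * ‖v‖))
      ≤ ENNReal.ofReal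
          (((volume (ball (0:E3) 1)).toReal + 1) * M₁ ^ ((1:ℝ)/5) * e ^ ((4:ℝ)/5)) := by
  set B : ℝ := (volume (ball (0:E3) 1)).toReal with hB
  have hB0 : 0 ≤ B := ENNReal.toReal_nonneg
  set a : ℝ := e ^ ((1:ℝ)/5) with ha
  set b : ℝ := M₁ ^ ((1:ℝ)/5) with hb
  have ha0 : 0 < a := Real.rpow_pos_of_pos he _
  have hb0 : 0 < b := Real.rpow_pos_of_pos hM₁ _
  have ha5 : a ^ (5:ℕ) = e := by
    rw [ha, ← Real.rpow_natCast (e ^ ((1:ℝ)/5)) 5, ← Real.rpow_mul he.le]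
    norm_num
  have hb5 : b ^ (5:ℕ) = M₁ := by
    rw [hb, ← Real.rpow_natCast (M₁ ^ ((1:ℝ)/5)) 5, ← Real.rpow_mul hM₁.le]
    norm_num
  have ha4 : a ^ (4:ℕ) = e ^ ((4:ℝ)/5) := by
    rw [ha, ← Real.rpow_natCast (e ^ ((1:ℝ)/5)) 4, ← Real.rpow_mul he.le]
    norm_num
  set R : ℝ := a / b with hRdef
  have hR : 0 < R := div_pos ha0 hb0
  have hsplit := (lintegral_add_compl (μ := (volume : Measure E3)) (fun v : E3 => ENNReal.ofReal (g v * ‖v‖))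
      (measurableSet_ball (x := (0:E3)) (ε := R))).symm
  rw [hsplit]
  -- ball part
  have hball : (∫⁻ v in ball (0:E3) R, ENNReal.ofReal (g v * ‖v‖))
      ≤ ENNReal.ofReal (M₁ * R * (R ^ 3 * B)) := by
    have h1 : (∫⁻ v in ball (0:E3) R, ENNReal.ofReal (g v * ‖v‖))
        ≤ ∫⁻ _ in ball (0:E3) R, ENNReal.ofReal (M₁ * R) := by
      refine setLIntegral_mono' measurableSet_ball fun v hv => ?_
      refine ENNReal.ofReal_le_ofReal ?_
      have hv' : ‖v‖ < R := by simpa [dist_eq_norm] using hv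
      exact mul_le_mul (hgM v) hv'.le (norm_nonneg v) hM₁.le
    have h2 : (∫⁻ _ in ball (0:E3) R, ENNReal.ofReal (M₁ * R))
        = ENNReal.ofReal (M₁ * R) * volume (ball (0:E3) R) :=
      setLIntegral_const _ _
    have h3 : volume (ball (0:E3) R) = ENNReal.ofReal (R ^ 3 * B) := by
      rw [Measure.addHaar_ball (volume : Measure E3) 0 hR.le,
        finrank_euclideanSpace_fin, hB,
        ENNReal.ofReal_mul (by positivity),
        ENNReal.ofReal_toReal (measure_ball_lt_top).ne]
    calc (∫⁻ v in ball (0:E3) R, ENNReal.ofReal (g v * ‖v‖))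
        ≤ ENNReal.ofReal (M₁ * R) * volume (ball (0:E3) R) := by rw [← h2]; exact h1
      _ = ENNReal.ofReal (M₁ * R) * ENNReal.ofReal (R ^ 3 * B) := by rw [h3]
      _ = ENNReal.ofReal (M₁ * R * (R ^ 3 * B)) := by
          rw [← ENNReal.ofReal_mul (by positivity)]
  -- outer part
  have houter : (∫⁻ v in (ball (0:E3) R)ᶜ, ENNReal.ofReal (g v * ‖v‖))
      ≤ ENNReal.ofReal (R⁻¹ * e) := by
    have h1 : (∫⁻ v in (ball (0:E3) R)ᶜ, ENNReal.ofReal (g v * ‖v‖))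
        ≤ ∫⁻ v in (ball (0:E3) R)ᶜ,
            ENNReal.ofReal R⁻¹ * ENNReal.ofReal (g v * (1 + ‖v‖) ^ 2) := by
      refine setLIntegral_mono' measurableSet_ball.compl fun v hv => ?_
      have hv' : R ≤ ‖v‖ := by
        have := hv
        simp only [Set.mem_compl_iff, mem_ball, dist_eq_norm, sub_zero, not_lt] at this
        exact this
      rw [← ENNReal.ofReal_mul (by positivity)]
      refine ENNReal.ofReal_le_ofReal ?_
      have hn : 0 ≤ ‖v‖ := norm_nonneg v
      have hg := hg0 v
      have hkey : R * (g v * ‖v‖) ≤ g v * (1 + ‖v‖) ^ 2 := by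
        nlinarith [mul_nonneg hg hn, mul_nonneg (mul_nonneg hg hn) hn, sq_nonneg (1 + ‖v‖)]
      calc g v * ‖v‖ = R⁻¹ * (R * (g v * ‖v‖)) := by field_simp
        _ ≤ R⁻¹ * (g v * (1 + ‖v‖) ^ 2) := mul_le_mul_of_nonneg_left hkey (by positivity)
    have h2 : (∫⁻ v in (ball (0:E3) R)ᶜ,
          ENNReal.ofReal R⁻¹ * ENNReal.ofReal (g v * (1 + ‖v‖) ^ 2))
        = ENNReal.ofReal R⁻¹ *
            ∫⁻ v in (ball (0:E3) R)ᶜ, ENNReal.ofReal (g v * (1 + ‖v‖) ^ 2) :=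
      lintegral_const_mul' _ _ ENNReal.ofReal_ne_top
    have h3 : (∫⁻ v in (ball (0:E3) R)ᶜ, ENNReal.ofReal (g v * (1 + ‖v‖) ^ 2))
        ≤ ENNReal.ofReal e :=
      le_trans (setLIntegral_le_lintegral _ _) hE
    calc (∫⁻ v in (ball (0:E3) R)ᶜ, ENNReal.ofReal (g v * ‖v‖))
        ≤ ENNReal.ofReal R⁻¹ *
            ∫⁻ v in (ball (0:E3) R)ᶜ, ENNReal.ofReal (g v * (1 + ‖v‖) ^ 2) := by
          rw [← h2]; exact h1
      _ ≤ ENNReal.ofReal R⁻¹ * ENNReal.ofReal e := by gcongr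
      _ = ENNReal.ofReal (R⁻¹ * e) := by
          rw [← ENNReal.ofReal_mul (by positivity)]
  calc (∫⁻ v in ball (0:E3) R, ENNReal.ofReal (g v * ‖v‖)) +
        ∫⁻ v in (ball (0:E3) R)ᶜ, ENNReal.ofReal (g v * ‖v‖)
      ≤ ENNReal.ofReal (M₁ * R * (R ^ 3 * B)) + ENNReal.ofReal (R⁻¹ * e) :=
        add_le_add hball houter
    _ = ENNReal.ofReal (M₁ * R * (R ^ 3 * B) + R⁻¹ * e) := by
        rw [← ENNReal.ofReal_add (by positivity) (by positivity)]
    _ = ENNReal.ofReal ((B + 1) * M₁ ^ ((1:ℝ)/5) * e ^ ((4:ℝ)/5)) := by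
        congr 1
        rw [← hb, ← ha4, ← ha5, ← hb5, hRdef]
        field_simp

/-- `L^p` bound (1 ≤ p ≤ 5/4) for the current `j(x) = ∫ v f(x,v) dv`:
`‖|j|‖_{L^p} ≤ C(M) (1 + ∫∫ (1+|v|)² f)`, with `C(M)` depending only on `M`. -/
theorem current_Lp_bound (M : ℝ) (hM : 0 ≤ M) :
    ∃ C : ℝ, 0 < C ∧
      ∀ (f : E3 × E3 → ℝ) (p : ℝ),
        Measurable f → (∀ z, 0 ≤ f z) → (∀ z, f z ≤ M) →
        (∫⁻ z : E3 × E3, ENNReal.ofReal (f z * (1 + ‖z.2‖) ^ 2)) < ⊤ →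
        1 ≤ p → p ≤ 5 / 4 →
        (∫⁻ x : E3, (ENNReal.ofReal ‖∫ v : E3, f (x, v) • v‖) ^ p) ^ (1 / p)
          ≤ ENNReal.ofReal
              (C * (1 + (∫⁻ z : E3 × E3,
                ENNReal.ofReal (f z * (1 + ‖z.2‖) ^ 2)).toReal)) := by
  classical
  set B : ℝ := (volume (ball (0:E3) 1)).toReal with hB
  have hB0 : 0 ≤ B := ENNReal.toReal_nonneg
  set M₁ : ℝ := M + 1 with hM₁def
  have hM₁ : 0 < M₁ := by linarith
  set D : ℝ := max 1 ((B + 1) * M₁ ^ ((1:ℝ)/5)) with hD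
  have hD1 : 1 ≤ D := le_max_left _ _
  set Dm : ℝ := D ^ ((5:ℝ)/4) with hDm
  have hDm1 : 1 ≤ Dm := Real.one_le_rpow hD1 (by norm_num)
  refine ⟨1 + Dm, by linarith, ?_⟩
  intro f p hf hf0 hfM hint hp1 hp2
  have hp0 : 0 < p := lt_of_lt_of_le one_pos hp1
  have hfM' : ∀ z, f z ≤ M₁ := fun z => (hfM z).trans (by linarith)
  set Ex : E3 → ℝ≥0∞ := fun x => ∫⁻ v : E3, ENNReal.ofReal (f (x, v) * (1 + ‖v‖) ^ 2)
    with hEx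
  set I : ℝ≥0∞ := ∫⁻ z : E3 × E3, ENNReal.ofReal (f z * (1 + ‖z.2‖) ^ 2) with hI
  have hmeas : Measurable fun z : E3 × E3 => ENNReal.ofReal (f z * (1 + ‖z.2‖) ^ 2) := by
    apply Measurable.ennreal_ofReal
    exact hf.mul (((measurable_const.add measurable_snd.norm).pow_const 2))
  have hIint : (∫⁻ x : E3, Ex x) = I := by
    rw [hI, Measure.volume_eq_prod, lintegral_prod _ hmeas.aemeasurable]
  -- pointwise bound
  have key : ∀ x : E3,
      (ENNReal.ofReal ‖∫ v : E3, f (x, v) • v‖) ^ p ≤ ENNReal.ofReal Dm * Ex x := by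
    intro x
    set g : E3 → ℝ := fun v => f (x, v) with hg
    set J : ℝ≥0∞ := ∫⁻ v : E3, ENNReal.ofReal (g v * ‖v‖) with hJ
    have step1 : ENNReal.ofReal ‖∫ v : E3, f (x, v) • v‖ ≤ J := by
      have hcong : J = ∫⁻ v : E3, ENNReal.ofReal ‖g v • v‖ := by
        refine lintegral_congr fun v => ?_
        rw [norm_smul, Real.norm_eq_abs, abs_of_nonneg (hf0 (x, v))]
      by_cases hJt : J = ⊤
      · rw [hJt]; exact le_top
      · have h1 : ‖∫ v : E3, g v • v‖ ≤ (∫⁻ v : E3, ENNReal.ofReal ‖g v • v‖).toReal :=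
          norm_integral_le_lintegral_norm _
        calc ENNReal.ofReal ‖∫ v : E3, f (x, v) • v‖
            ≤ ENNReal.ofReal ((∫⁻ v : E3, ENNReal.ofReal ‖g v • v‖).toReal) :=
              ENNReal.ofReal_le_ofReal h1
          _ = ENNReal.ofReal (J.toReal) := by rw [← hcong]
          _ = J := ENNReal.ofReal_toReal hJt
    have htriv : J ≤ Ex x := by
      refine lintegral_mono fun v => ENNReal.ofReal_le_ofReal ?_
      have hn : 0 ≤ ‖v‖ := norm_nonneg v
      have := hf0 (x, v)
      simp only [hg]
      exact mul_le_mul_of_nonneg_left (by nlinarith) this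
    by_cases hExt : Ex x = ⊤
    · rw [hExt, ENNReal.mul_top (by
        simp only [ne_eq, ENNReal.ofReal_eq_zero, not_le]; linarith)]
      exact le_top
    · set e : ℝ := (Ex x).toReal with he
      have hExe : Ex x = ENNReal.ofReal e := (ENNReal.ofReal_toReal hExt).symm
      have he0 : 0 ≤ e := ENNReal.toReal_nonneg
      rcases le_or_gt e 1 with h1e | h1e
      · -- small case
        have hX1 : ENNReal.ofReal ‖∫ v : E3, f (x, v) • v‖ ≤ 1 := by
          refine le_trans step1 (le_trans htriv ?_)
          rw [hExe]; exact ENNReal.ofReal_le_one.mpr h1e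
        calc (ENNReal.ofReal ‖∫ v : E3, f (x, v) • v‖) ^ p
            ≤ (ENNReal.ofReal ‖∫ v : E3, f (x, v) • v‖) ^ (1:ℝ) :=
              ENNReal.rpow_le_rpow_of_exponent_ge hX1 hp1
          _ = ENNReal.ofReal ‖∫ v : E3, f (x, v) • v‖ := ENNReal.rpow_one _
          _ ≤ Ex x := le_trans step1 htriv
          _ ≤ ENNReal.ofReal Dm * Ex x := by
              refine le_mul_of_one_le_left (zero_le (a := Ex x)) ?_
              rw [← ENNReal.ofReal_one]
              exact ENNReal.ofReal_le_ofReal hDm1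
      · -- large case
        have hsplit : J ≤ ENNReal.ofReal ((B + 1) * M₁ ^ ((1:ℝ)/5) * e ^ ((4:ℝ)/5)) := by
          refine split_bound M₁ hM₁ g (fun v => hf0 (x, v)) (fun v => hfM' (x, v))
            (lt_trans one_pos h1e) ?_
          rw [← hExe]
        have hXD : ENNReal.ofReal ‖∫ v : E3, f (x, v) • v‖
            ≤ ENNReal.ofReal (D * e ^ ((4:ℝ)/5)) := by
          refine le_trans step1 (le_trans hsplit (ENNReal.ofReal_le_ofReal ?_))
          exact mul_le_mul_of_nonneg_right (le_max_right _ _)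
            (Real.rpow_nonneg he0 _)
        calc (ENNReal.ofReal ‖∫ v : E3, f (x, v) • v‖) ^ p
            ≤ (ENNReal.ofReal (D * e ^ ((4:ℝ)/5))) ^ p :=
              ENNReal.rpow_le_rpow hXD hp0.le
          _ = ENNReal.ofReal ((D * e ^ ((4:ℝ)/5)) ^ p) :=
              ENNReal.ofReal_rpow_of_nonneg (by positivity) hp0.le
          _ ≤ ENNReal.ofReal (Dm * e) := by
              refine ENNReal.ofReal_le_ofReal ?_
              have hDnn : (0:ℝ) ≤ D := by linarith
              rw [Real.mul_rpow hDnn (Real.rpow_nonneg he0 _),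
                ← Real.rpow_mul he0]
              have h1 : D ^ p ≤ Dm := by
                rw [hDm]; exact Real.rpow_le_rpow_of_exponent_le hD1 hp2
              have h2 : e ^ ((4:ℝ)/5 * p) ≤ e := by
                nth_rewrite 2 [← Real.rpow_one e]
                exact Real.rpow_le_rpow_of_exponent_le h1e.le (by linarith)
              exact mul_le_mul h1 h2 (Real.rpow_nonneg he0 _) (by linarith)
          _ = ENNReal.ofReal Dm * Ex x := by
              rw [ENNReal.ofReal_mul (by linarith), hExe]
  -- integrate
  have hint2 : (∫⁻ x : E3, (ENNReal.ofReal ‖∫ v : E3, f (x, v) • v‖) ^ p)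
      ≤ ENNReal.ofReal Dm * I := by
    calc (∫⁻ x : E3, (ENNReal.ofReal ‖∫ v : E3, f (x, v) • v‖) ^ p)
        ≤ ∫⁻ x : E3, ENNReal.ofReal Dm * Ex x := lintegral_mono key
      _ = ENNReal.ofReal Dm * ∫⁻ x : E3, Ex x :=
          lintegral_const_mul' _ _ ENNReal.ofReal_ne_top
      _ = ENNReal.ofReal Dm * I := by rw [hIint]
  set T : ℝ≥0∞ := ENNReal.ofReal Dm * I with hT
  have hfinal1 : (∫⁻ x : E3, (ENNReal.ofReal ‖∫ v : E3, f (x, v) • v‖) ^ p) ^ (1/p)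
      ≤ T ^ (1/p) := ENNReal.rpow_le_rpow hint2 (by positivity)
  have hfinal2 : T ^ (1/p) ≤ 1 + T := by
    rcases le_total T 1 with hT1 | hT1
    · exact le_trans (ENNReal.rpow_le_one hT1 (by positivity)) le_self_add
    · calc T ^ (1/p) ≤ T ^ (1:ℝ) :=
          ENNReal.rpow_le_rpow_of_exponent_le hT1 (by
            rw [div_le_one hp0]; exact hp1)
        _ = T := ENNReal.rpow_one _
        _ ≤ 1 + T := le_add_self
  have hItop : I ≠ ⊤ := hint.ne
  set i : ℝ := I.toReal with hi
  have hi0 : 0 ≤ i := ENNReal.toReal_nonneg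
  have hIe : I = ENNReal.ofReal i := (ENNReal.ofReal_toReal hItop).symm
  have hfinal3 : 1 + T ≤ ENNReal.ofReal ((1 + Dm) * (1 + i)) := by
    have : (1:ℝ≥0∞) + T = ENNReal.ofReal (1 + Dm * i) := by
      rw [hT, hIe, ← ENNReal.ofReal_mul (by linarith), ENNReal.ofReal_add (by norm_num)
        (by positivity), ENNReal.ofReal_one]
    rw [this]
    refine ENNReal.ofReal_le_ofReal ?_
    nlinarith
  exact le_trans hfinal1 (le_trans hfinal2 hfinal3)
end

section
/- Let f : ℝ³_x × ℝ³_v → ℝ be nonnegative measurable with ‖f‖_{L∞} ≤ M, let 0 < μ < λ, and suppose ∫∫ |v|^λ f dx dv < ∞. Then ‖∫_{ℝ³_v} |v|^μ f(·, v) dv‖_{L^{(3+λ)/(3+μ)}(ℝ³_x)} ≤ C(λ, μ) · M^{(λ-μ)/(3+λ)} · (∫∫ |v|^λ f dx dv)^{(3+μ)/(3+λ)}. -/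
open MeasureTheory ENNReal Metric

noncomputable def vB : ℝ := (volume (ball (0:E3) 1)).toReal

lemma vB_pos : 0 < vB := ENNReal.toReal_pos (measure_ball_pos _ _ one_pos).ne' measure_ball_lt_top.ne

lemma vol_ball_eq (R : ℝ) (hR : 0 ≤ R) :
    volume (ball (0:E3) R) = ENNReal.ofReal (R ^ (3:ℝ) * vB) := by
  rw [Measure.addHaar_ball _ _ hR, ENNReal.ofReal_mul (by positivity), vB,
    ENNReal.ofReal_toReal measure_ball_lt_top.ne]
  congr 1
  rw [finrank_euclideanSpace_fin]
  rw [ENNReal.ofReal_eq_ofReal_iff (by positivity) (by positivity)]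
  exact (Real.rpow_natCast R 3).symm

lemma split_bound_s13 {l m : ℝ} (hm : 0 < m) (hml : m < l) (f : E3 → ℝ)
    (hf : Measurable f) (h0 : ∀ v, 0 ≤ f v) (M : ℝ) (hM : ∀ v, f v ≤ M)
    (R : ℝ) (hR : 0 < R) :
    ∫⁻ v, ENNReal.ofReal (f v * ‖v‖ ^ m) ≤
      ENNReal.ofReal (M * vB * R ^ (3 + m)) +
        ENNReal.ofReal (R ^ (m - l)) * ∫⁻ v, ENNReal.ofReal (f v * ‖v‖ ^ l) := by
  have hM0 : 0 ≤ M := le_trans (h0 0) (hM 0)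
  have hmeas : ∀ (c : ℝ), 0 ≤ c → Measurable (fun v : E3 => ENNReal.ofReal (f v * ‖v‖ ^ c)) := by
    intro c hc
    exact (hf.mul (((Real.continuous_rpow_const hc).comp continuous_norm).measurable)).ennreal_ofReal
  rw [← lintegral_add_compl (μ := volume) _ (measurableSet_ball (x := (0:E3)) (ε := R))]
  gcongr
  · -- ball part
    calc ∫⁻ v in ball (0:E3) R, ENNReal.ofReal (f v * ‖v‖ ^ m)
        ≤ ∫⁻ _ in ball (0:E3) R, ENNReal.ofReal (M * R ^ m) := by
          apply setLIntegral_mono measurable_const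
          intro v hv
          apply ENNReal.ofReal_le_ofReal
          have hv' : ‖v‖ < R := by simpa [dist_eq_norm] using hv
          exact mul_le_mul (hM v) (Real.rpow_le_rpow (norm_nonneg v) hv'.le hm.le)
            (Real.rpow_nonneg (norm_nonneg v) m) hM0
      _ = ENNReal.ofReal (M * R ^ m) * volume (ball (0:E3) R) := setLIntegral_const _ _
      _ = ENNReal.ofReal (M * vB * R ^ (3 + m)) := by
          rw [vol_ball_eq R hR.le, ← ENNReal.ofReal_mul (by positivity)]
          congr 1
          rw [Real.rpow_add hR]
          ring
  · -- complement part
    calc ∫⁻ v in (ball (0:E3) R)ᶜ, ENNReal.ofReal (f v * ‖v‖ ^ m)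
        ≤ ∫⁻ v in (ball (0:E3) R)ᶜ, ENNReal.ofReal (R ^ (m - l)) * ENNReal.ofReal (f v * ‖v‖ ^ l) := by
          apply setLIntegral_mono (measurable_const.mul (hmeas l (by linarith)))
          intro v hv
          have hv' : R ≤ ‖v‖ := by
            simp only [Set.mem_compl_iff, mem_ball, dist_eq_norm, sub_zero, not_lt] at hv
            simpa using hv
          have hvpos : 0 < ‖v‖ := lt_of_lt_of_le hR hv'
          simp only [Pi.mul_apply]
          rw [← ENNReal.ofReal_mul (by positivity)]
          apply ENNReal.ofReal_le_ofReal
          have h1 : ‖v‖ ^ m = ‖v‖ ^ (m - l) * ‖v‖ ^ l := by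
            rw [← Real.rpow_add hvpos]; ring_nf
          have h2 : ‖v‖ ^ (m - l) ≤ R ^ (m - l) :=
            Real.rpow_le_rpow_of_nonpos hR hv' (by linarith)
          calc f v * ‖v‖ ^ m = ‖v‖ ^ (m - l) * (f v * ‖v‖ ^ l) := by rw [h1]; ring
            _ ≤ R ^ (m - l) * (f v * ‖v‖ ^ l) := by
                apply mul_le_mul_of_nonneg_right h2 (mul_nonneg (h0 v) (Real.rpow_nonneg (norm_nonneg v) l))
      _ = ENNReal.ofReal (R ^ (m - l)) * ∫⁻ v in (ball (0:E3) R)ᶜ, ENNReal.ofReal (f v * ‖v‖ ^ l) :=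
          lintegral_const_mul' _ _ ENNReal.ofReal_ne_top
      _ ≤ ENNReal.ofReal (R ^ (m - l)) * ∫⁻ v, ENNReal.ofReal (f v * ‖v‖ ^ l) := by
          gcongr
          exact Measure.restrict_le_self

lemma pointwise_bound {l m : ℝ} (hm : 0 < m) (hml : m < l) (f : E3 → ℝ)
    (hf : Measurable f) (h0 : ∀ v, 0 ≤ f v) (M : ℝ) (hM : ∀ v, f v ≤ M) (hMp : 0 < M) :
    ∫⁻ v, ENNReal.ofReal (f v * ‖v‖ ^ m) ≤
      ENNReal.ofReal ((vB + 1) * M ^ ((l - m) / (3 + l))) *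
        (∫⁻ v, ENNReal.ofReal (f v * ‖v‖ ^ l)) ^ ((3 + m) / (3 + l)) := by
  have h3l : (0:ℝ) < 3 + l := by linarith
  have h3m : (0:ℝ) < 3 + m := by linarith
  have hcpos : (0:ℝ) < (vB + 1) * M ^ ((l - m) / (3 + l)) := by
    have := vB_pos
    positivity
  set g := ∫⁻ v, ENNReal.ofReal (f v * ‖v‖ ^ l) with hg
  rcases eq_top_or_lt_top g with hgt | hgt
  · rw [hgt, ENNReal.top_rpow_of_pos (by positivity), ENNReal.mul_top]
    · exact le_top
    · simpa using hcpos
  rcases eq_or_ne g 0 with hg0 | hg0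
  · -- g = 0 : f vanishes a.e. away from 0
    have hml' : Measurable (fun v : E3 => ENNReal.ofReal (f v * ‖v‖ ^ l)) :=
      (hf.mul (((Real.continuous_rpow_const (by linarith : (0:ℝ) ≤ l)).comp
        continuous_norm).measurable)).ennreal_ofReal
    have hae : ∀ᵐ v : E3, ENNReal.ofReal (f v * ‖v‖ ^ l) = 0 :=
      (lintegral_eq_zero_iff hml').mp hg0
    have hne : ∀ᵐ v : E3, v ≠ (0:E3) := by
      rw [ae_iff]
      simpa using measure_singleton (0:E3)
    have : ∀ᵐ v : E3, ENNReal.ofReal (f v * ‖v‖ ^ m) = 0 := by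
      filter_upwards [hae, hne] with v h1 h2
      have hnv : 0 < ‖v‖ := norm_pos_iff.mpr h2
      have hl0 : f v * ‖v‖ ^ l ≤ 0 := by
        by_contra hcon
        push_neg at hcon
        exact absurd h1 (by simp [ENNReal.ofReal_eq_zero, not_le, hcon])
      have hf0 : f v = 0 := by
        have hpow : 0 < ‖v‖ ^ l := Real.rpow_pos_of_pos hnv l
        nlinarith [h0 v]
      simp [hf0]
    rw [lintegral_congr_ae this, lintegral_zero]
    exact zero_le
  · -- main case : 0 < g < ∞, optimize R
    set G := g.toReal with hG
    have hGp : 0 < G := ENNReal.toReal_pos hg0 hgt.ne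
    have hGM : 0 < G / M := by positivity
    set R := (G / M) ^ ((3 + l)⁻¹) with hRdef
    have hR : 0 < R := Real.rpow_pos_of_pos hGM _
    refine le_trans (split_bound_s13 hm hml f hf h0 M hM R hR) ?_
    have hgof : g = ENNReal.ofReal G := (ENNReal.ofReal_toReal hgt.ne).symm
    rw [← hg, hgof, ← ENNReal.ofReal_mul (Real.rpow_nonneg hR.le _), ← ENNReal.ofReal_add
      (mul_nonneg (mul_nonneg hMp.le vB_pos.le) (Real.rpow_nonneg hR.le _)) (mul_nonneg (Real.rpow_nonneg hR.le _) hGp.le),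
      ENNReal.ofReal_rpow_of_nonneg hGp.le (by positivity), ← ENNReal.ofReal_mul hcpos.le]
    apply ENNReal.ofReal_le_ofReal
    -- real computation
    have hA : R ^ (3 + m) = (G / M) ^ ((3 + m) / (3 + l)) := by
      rw [hRdef, ← Real.rpow_mul hGM.le]
      congr 1
      field_simp
    have hB : R ^ (m - l) = (G / M) ^ ((m - l) / (3 + l)) := by
      rw [hRdef, ← Real.rpow_mul hGM.le]
      congr 1
      field_simp
    rw [hA, hB, Real.div_rpow hGp.le hMp.le, Real.div_rpow hGp.le hMp.le]
    have e1 : M ^ ((l - m) / (3 + l)) = M / M ^ ((3 + m) / (3 + l)) := by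
      rw [show (l - m) / (3 + l) = 1 - (3 + m) / (3 + l) by field_simp; ring,
        Real.rpow_sub hMp, Real.rpow_one]
    have e2 : G ^ ((m - l) / (3 + l)) = G ^ ((3 + m) / (3 + l)) / G := by
      rw [show (m - l) / (3 + l) = (3 + m) / (3 + l) - 1 by field_simp; ring,
        Real.rpow_sub hGp, Real.rpow_one]
    have e3 : M ^ ((m - l) / (3 + l)) = M ^ ((3 + m) / (3 + l)) / M := by
      rw [show (m - l) / (3 + l) = (3 + m) / (3 + l) - 1 by field_simp; ring,
        Real.rpow_sub hMp, Real.rpow_one]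
    rw [e1, e2, e3]
    have hMt : (0:ℝ) < M ^ ((3 + m) / (3 + l)) := Real.rpow_pos_of_pos hMp _
    have hGt : (0:ℝ) < G ^ ((3 + m) / (3 + l)) := Real.rpow_pos_of_pos hGp _
    apply le_of_eq
    field_simp

/-- Weighted velocity-averaging estimate: for `0 < μ < λ` there is `C(λ,μ)` with
`‖∫ |v|^μ f dv‖_{L^{(3+λ)/(3+μ)}_x} ≤ C M^{(λ-μ)/(3+λ)} (∫∫ |v|^λ f)^{(3+μ)/(3+λ)}`. -/
theorem weighted_velocity_averaging (l m : ℝ) (hm : 0 < m) (hml : m < l) :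
    ∃ C : ℝ, 0 < C ∧
      ∀ (f : E3 × E3 → ℝ) (M : ℝ),
        Measurable f → (∀ z, 0 ≤ f z) → (∀ z, f z ≤ M) → 0 ≤ M →
        (∫⁻ z : E3 × E3, ENNReal.ofReal (f z * ‖z.2‖ ^ l)) < ⊤ →
        (∫⁻ x : E3,
            (∫⁻ v : E3, ENNReal.ofReal (f (x, v) * ‖v‖ ^ m)) ^ ((3 + l) / (3 + m)))
              ^ ((3 + m) / (3 + l))
          ≤ ENNReal.ofReal (C * M ^ ((l - m) / (3 + l))) *
            (∫⁻ z : E3 × E3, ENNReal.ofReal (f z * ‖z.2‖ ^ l)) ^ ((3 + m) / (3 + l)) := by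
  have h3l : (0:ℝ) < 3 + l := by linarith
  have h3m : (0:ℝ) < 3 + m := by linarith
  have hP : (0:ℝ) < (3 + l) / (3 + m) := by positivity
  have hθ : (0:ℝ) < (3 + m) / (3 + l) := by positivity
  have hθP : (3 + m) / (3 + l) * ((3 + l) / (3 + m)) = 1 := by field_simp
  refine ⟨vB + 1, by have := vB_pos; linarith, ?_⟩
  intro f M hf h0 hM hM0 hI
  rcases eq_or_lt_of_le hM0 with hM0' | hMp
  · -- M = 0 : f ≡ 0
    have hfz : ∀ z, f z = 0 := fun z => le_antisymm (hM0' ▸ hM z) (h0 z)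
    simp only [hfz, zero_mul, ENNReal.ofReal_zero, lintegral_zero,
      ENNReal.zero_rpow_of_pos hP, lintegral_zero, ENNReal.zero_rpow_of_pos hθ]
    exact zero_le
  -- measurability
  have hFl : Measurable (fun z : E3 × E3 => ENNReal.ofReal (f z * ‖z.2‖ ^ l)) :=
    (hf.mul (((Real.continuous_rpow_const (by linarith : (0:ℝ) ≤ l)).comp
      (continuous_norm.comp continuous_snd)).measurable)).ennreal_ofReal
  set A : ℝ≥0∞ := ENNReal.ofReal ((vB + 1) * M ^ ((l - m) / (3 + l))) with hA
  have hAne : A ≠ ⊤ := ENNReal.ofReal_ne_top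
  set g : E3 → ℝ≥0∞ := fun x => ∫⁻ v, ENNReal.ofReal (f (x, v) * ‖v‖ ^ l) with hgdef
  have hgm : Measurable g := hFl.lintegral_prod_right'
  have hTon : (∫⁻ z : E3 × E3, ENNReal.ofReal (f z * ‖z.2‖ ^ l)) = ∫⁻ x, g x := by
    rw [Measure.volume_eq_prod, lintegral_prod _ hFl.aemeasurable]
  -- pointwise bound raised to power P
  have key : ∀ x : E3,
      (∫⁻ v, ENNReal.ofReal (f (x, v) * ‖v‖ ^ m)) ^ ((3 + l) / (3 + m))
        ≤ A ^ ((3 + l) / (3 + m)) * g x := by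
    intro x
    have hpt := pointwise_bound hm hml (fun v => f (x, v))
      (hf.comp measurable_prodMk_left) (fun v => h0 (x, v)) M (fun v => hM (x, v)) hMp
    calc (∫⁻ v, ENNReal.ofReal (f (x, v) * ‖v‖ ^ m)) ^ ((3 + l) / (3 + m))
        ≤ (A * (g x) ^ ((3 + m) / (3 + l))) ^ ((3 + l) / (3 + m)) :=
          ENNReal.rpow_le_rpow hpt hP.le
      _ = A ^ ((3 + l) / (3 + m)) * g x := by
          rw [ENNReal.mul_rpow_of_nonneg _ _ hP.le, ← ENNReal.rpow_mul, hθP,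
            ENNReal.rpow_one]
  calc (∫⁻ x : E3, (∫⁻ v, ENNReal.ofReal (f (x, v) * ‖v‖ ^ m)) ^ ((3 + l) / (3 + m)))
          ^ ((3 + m) / (3 + l))
      ≤ (∫⁻ x : E3, A ^ ((3 + l) / (3 + m)) * g x) ^ ((3 + m) / (3 + l)) :=
        ENNReal.rpow_le_rpow (lintegral_mono key) hθ.le
    _ = (A ^ ((3 + l) / (3 + m)) * ∫⁻ x, g x) ^ ((3 + m) / (3 + l)) := by
        rw [lintegral_const_mul' _ _ (ENNReal.rpow_ne_top_of_nonneg hP.le hAne)]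
    _ = A * (∫⁻ x, g x) ^ ((3 + m) / (3 + l)) := by
        rw [ENNReal.mul_rpow_of_nonneg _ _ hθ.le, ← ENNReal.rpow_mul]
        rw [show (3 + l) / (3 + m) * ((3 + m) / (3 + l)) = 1 by field_simp, ENNReal.rpow_one]
    _ = ENNReal.ofReal ((vB + 1) * M ^ ((l - m) / (3 + l))) *
          (∫⁻ z : E3 × E3, ENNReal.ofReal (f z * ‖z.2‖ ^ l)) ^ ((3 + m) / (3 + l)) := by
        rw [hTon]
end
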